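/- arXiv:2407.00058 — 2 statements merged into one kernel-verified Lean document; each statement's English description precedes it below -/
import Mathlib

section
/- For every odd prime p, the formal power series identity F_{p-1}(q) = ψ(q) · ∏_{i≥1} ψ(q^{2^i})^{p·2^{i-1}} holds, where F_{p-1}(q) = ∏_{j≥1} 1/((1-q^j)(1-q^{2j})^{p-2}) and ψ(q) = ∏_{j≥1}(1-q^{2j})^2/(1-q^j). -/
open PowerSeries

/-- The infinite product `∏_{j ≥ 1} g j` of formal power series, for families where the
factor `g j` is `≡ 1 (mod q^j)`, so that the coefficient of `q^n` is that of the
finite product over `1 ≤ j ≤ n`. -/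
noncomputable def iprod (g : ℕ → PowerSeries ℚ) : PowerSeries ℚ :=
  PowerSeries.mk fun n => coeff n (∏ j ∈ Finset.Icc 1 n, g j)

/-- `F_{p-1}(q) = ∏_{j≥1} 1/((1-q^j)(1-q^{2j})^{p-2})`. -/
noncomputable def F (c : ℕ) : PowerSeries ℚ :=
  iprod (fun j => ((1 - (X : PowerSeries ℚ) ^ j) * (1 - X ^ (2 * j)) ^ (c - 1))⁻¹)

/-- `ψ(q^m) = ∏_{j≥1} (1-q^{2mj})^2/(1-q^{mj})`. -/
noncomputable def psiM (m : ℕ) : PowerSeries ℚ :=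
  iprod (fun j => (1 - (X : PowerSeries ℚ) ^ (2 * m * j)) ^ 2 * (1 - X ^ (m * j))⁻¹)

lemma mul_sub_one_dvd {R : Type*} [CommRing R] {d a b : R} (ha : d ∣ a - 1) (hb : d ∣ b - 1) :
    d ∣ a * b - 1 := by
  have : a * b - 1 = (a - 1) * b + (b - 1) := by ring
  rw [this]; exact dvd_add (ha.mul_right _) hb

lemma pow_sub_one_dvd {R : Type*} [CommRing R] {d a : R} (ha : d ∣ a - 1) (e : ℕ) :
    d ∣ a ^ e - 1 := by
  have := sub_dvd_pow_sub_pow a 1 e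
  rw [one_pow] at this
  exact ha.trans this

lemma prod_sub_one_dvd {R : Type*} [CommRing R] {d : R} {S : Finset ℕ} {g : ℕ → R}
    (h : ∀ j ∈ S, d ∣ g j - 1) : d ∣ (∏ j ∈ S, g j) - 1 := by
  induction S using Finset.cons_induction with
  | empty => simp
  | cons a s ha ih =>
    rw [Finset.prod_cons]
    exact mul_sub_one_dvd (h a (Finset.mem_cons_self ..))
      (ih fun j hj => h j (Finset.mem_cons_of_mem hj))

lemma dvd_coeff_eq {c k : ℕ} {A B : PowerSeries ℚ} (h : (X : PowerSeries ℚ) ^ c ∣ A - B)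
    (hk : k < c) : coeff k A = coeff k B := by
  have := (PowerSeries.X_pow_dvd_iff.mp h) k hk
  rw [map_sub, sub_eq_zero] at this
  exact this

lemma coeff_iprod (g : ℕ → PowerSeries ℚ) (n : ℕ) :
    coeff n (iprod g) = coeff n (∏ j ∈ Finset.Icc 1 n, g j) := by
  simp [iprod, coeff_mk]

/-- truncation lemma -/
lemma iprod_trunc {g : ℕ → PowerSeries ℚ} (hg : ∀ j, 1 ≤ j → (X : PowerSeries ℚ) ^ j ∣ g j - 1)
    {n N : ℕ} (hnN : n ≤ N) :
    (X : PowerSeries ℚ) ^ (n + 1) ∣ iprod g - ∏ j ∈ Finset.Icc 1 N, g j := by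
  rw [PowerSeries.X_pow_dvd_iff]
  intro k hk
  have hkn : k ≤ n := Nat.lt_succ_iff.mp hk
  rw [map_sub, sub_eq_zero, coeff_iprod]
  have hsplit : (∏ j ∈ Finset.Ioc 0 k, g j) * ∏ j ∈ Finset.Ioc k N, g j
      = ∏ j ∈ Finset.Ioc 0 N, g j :=
    Finset.prod_Ioc_consecutive g (Nat.zero_le k) (hkn.trans hnN)
  have hIcc : ∀ m : ℕ, Finset.Icc 1 m = Finset.Ioc 0 m := fun m => Finset.Icc_add_one_left_eq_Ioc 0 m
  rw [hIcc, hIcc, ← hsplit]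
  have htail : (X : PowerSeries ℚ) ^ (k + 1) ∣ (∏ j ∈ Finset.Ioc k N, g j) - 1 := by
    apply prod_sub_one_dvd
    intro j hj
    obtain ⟨hj1, hj2⟩ := Finset.mem_Ioc.mp hj
    exact (pow_dvd_pow (X : PowerSeries ℚ) hj1).trans (hg j (le_trans (Nat.one_le_iff_ne_zero.mpr (by omega)) le_rfl))
  have : coeff k ((∏ j ∈ Finset.Ioc 0 k, g j) * ((∏ j ∈ Finset.Ioc k N, g j) - 1)) = 0 := by
    obtain ⟨t, ht⟩ := htail
    rw [ht]
    have : (∏ j ∈ Finset.Ioc 0 k, g j) * ((X:PowerSeries ℚ) ^ (k+1) * t)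
        = (X:PowerSeries ℚ)^(k+1) * ((∏ j ∈ Finset.Ioc 0 k, g j) * t) := by ring
    rw [this]
    exact PowerSeries.X_pow_dvd_iff.mp (Dvd.intro _ rfl) k (Nat.lt_succ_self k)
  rw [mul_sub, mul_one, map_sub, sub_eq_zero] at this
  exact this.symm

lemma iprod_sub_one_dvd {g : ℕ → PowerSeries ℚ} {c : ℕ}
    (h : ∀ j, 1 ≤ j → (X : PowerSeries ℚ) ^ c ∣ g j - 1) :
    (X : PowerSeries ℚ) ^ c ∣ iprod g - 1 := by
  rw [PowerSeries.X_pow_dvd_iff]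
  intro k hk
  rw [map_sub, sub_eq_zero, coeff_iprod]
  have : (X : PowerSeries ℚ) ^ c ∣ (∏ j ∈ Finset.Icc 1 k, g j) - 1 :=
    prod_sub_one_dvd fun j hj => h j (Finset.mem_Icc.mp hj).1
  exact dvd_coeff_eq (A := ∏ j ∈ Finset.Icc 1 k, g j) (B := 1) this hk

lemma iprod_one : iprod (fun _ => (1 : PowerSeries ℚ)) = 1 := by
  apply PowerSeries.ext; intro n
  simp [coeff_iprod]

lemma iprod_mul {g h : ℕ → PowerSeries ℚ}
    (hg : ∀ j, 1 ≤ j → (X : PowerSeries ℚ) ^ j ∣ g j - 1)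
    (hh : ∀ j, 1 ≤ j → (X : PowerSeries ℚ) ^ j ∣ h j - 1) :
    iprod g * iprod h = iprod (fun j => g j * h j) := by
  have hgh : ∀ j, 1 ≤ j → (X : PowerSeries ℚ) ^ j ∣ g j * h j - 1 :=
    fun j hj => mul_sub_one_dvd (hg j hj) (hh j hj)
  apply PowerSeries.ext; intro n
  set P := ∏ j ∈ Finset.Icc 1 n, g j
  set Q := ∏ j ∈ Finset.Icc 1 n, h j
  have h1 : (X : PowerSeries ℚ) ^ (n+1) ∣ iprod g * iprod h - P * Q := by
    have : iprod g * iprod h - P * Q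
        = iprod g * (iprod h - Q) + (iprod g - P) * Q := by ring
    rw [this]
    exact dvd_add ((iprod_trunc hh le_rfl).mul_left _) ((iprod_trunc hg le_rfl).mul_right _)
  have h2 : (X : PowerSeries ℚ) ^ (n+1) ∣ iprod (fun j => g j * h j) - P * Q := by
    have : P * Q = ∏ j ∈ Finset.Icc 1 n, (g j * h j) := by
      rw [← Finset.prod_mul_distrib]
    rw [this]
    exact iprod_trunc hgh le_rfl
  rw [dvd_coeff_eq h1 (Nat.lt_succ_self n), dvd_coeff_eq h2 (Nat.lt_succ_self n)]

lemma iprod_pow {g : ℕ → PowerSeries ℚ}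
    (hg : ∀ j, 1 ≤ j → (X : PowerSeries ℚ) ^ j ∣ g j - 1) (e : ℕ) :
    iprod g ^ e = iprod (fun j => g j ^ e) := by
  induction e with
  | zero => simp [iprod_one]
  | succ e ih =>
    have hge : ∀ j, 1 ≤ j → (X : PowerSeries ℚ) ^ j ∣ g j ^ e - 1 :=
      fun j hj => pow_sub_one_dvd (hg j hj) e
    rw [pow_succ, ih, iprod_mul hge hg]
    simp only [← pow_succ]

lemma iprod_congr {g h : ℕ → PowerSeries ℚ} (hgh : ∀ j, 1 ≤ j → g j = h j) :
    iprod g = iprod h := by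
  apply PowerSeries.ext; intro n
  rw [coeff_iprod, coeff_iprod]
  congr 1
  exact Finset.prod_congr rfl fun j hj => hgh j (Finset.mem_Icc.mp hj).1



noncomputable def fM (m : ℕ) : PowerSeries ℚ :=
  iprod (fun j => 1 - (X : PowerSeries ℚ) ^ (m * j))

lemma constOne {k : ℕ} (hk : 1 ≤ k) :
    constantCoeff (1 - (X : PowerSeries ℚ) ^ k) = 1 := by
  simp [zero_pow (by omega : k ≠ 0)]

lemma one_sub_cond {c k : ℕ} (hck : c ≤ k) :
    (X : PowerSeries ℚ) ^ c ∣ (1 - (X : PowerSeries ℚ) ^ k) - 1 := by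
  have : (1 - (X : PowerSeries ℚ) ^ k) - 1 = -(X ^ k) := by ring
  rw [this]
  exact (pow_dvd_pow _ hck).neg_right

lemma inv_cond {φ w : PowerSeries ℚ} {c : ℕ} (hφc : constantCoeff φ ≠ 0)
    (hφ : (X : PowerSeries ℚ) ^ c ∣ φ - 1) (hw : (X : PowerSeries ℚ) ^ c ∣ w - 1) :
    (X : PowerSeries ℚ) ^ c ∣ w * φ⁻¹ - 1 := by
  have hinv := PowerSeries.mul_inv_cancel φ hφc
  have : w * φ⁻¹ - 1 = (w - φ) * φ⁻¹ := by
    rw [sub_mul, mul_comm φ φ⁻¹, PowerSeries.inv_mul_cancel φ hφc]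
  rw [this]
  have : w - φ = (w - 1) - (φ - 1) := by ring
  exact (this ▸ (dvd_sub hw hφ)).mul_right _

-- condition for psiM factors
lemma psiM_factor_cond {m c : ℕ} (hm : 1 ≤ m) :
    ∀ j, 1 ≤ j → c ≤ m * j →
      (X : PowerSeries ℚ) ^ c ∣
        (1 - (X : PowerSeries ℚ) ^ (2 * m * j)) ^ 2 * (1 - X ^ (m * j))⁻¹ - 1 := by
  intro j hj hc
  apply inv_cond (by rw [constOne (by nlinarith : 1 ≤ m * j)]; norm_num) (one_sub_cond hc)
  exact pow_sub_one_dvd (one_sub_cond (by nlinarith)) 2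

lemma psiM_cond {m : ℕ} (hm : 1 ≤ m) :
    ∀ j, 1 ≤ j → (X : PowerSeries ℚ) ^ j ∣
      (1 - (X : PowerSeries ℚ) ^ (2 * m * j)) ^ 2 * (1 - X ^ (m * j))⁻¹ - 1 :=
  fun j hj => psiM_factor_cond hm j hj (by nlinarith)

lemma psiM_sub_one {m : ℕ} (hm : 1 ≤ m) :
    (X : PowerSeries ℚ) ^ m ∣ psiM m - 1 :=
  iprod_sub_one_dvd fun j hj => psiM_factor_cond hm j hj (by nlinarith)

lemma fM_cond {m : ℕ} (hm : 1 ≤ m) :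
    ∀ j, 1 ≤ j → (X : PowerSeries ℚ) ^ j ∣ (1 - (X : PowerSeries ℚ) ^ (m * j)) - 1 :=
  fun j hj => one_sub_cond (by nlinarith)

lemma fM_sub_one {m : ℕ} (hm : 1 ≤ m) :
    (X : PowerSeries ℚ) ^ m ∣ fM m - 1 :=
  iprod_sub_one_dvd fun j hj => one_sub_cond (by nlinarith)

lemma F_cond (c : ℕ) :
    ∀ j, 1 ≤ j → (X : PowerSeries ℚ) ^ j ∣
      ((1 - (X : PowerSeries ℚ) ^ j) * (1 - X ^ (2 * j)) ^ (c - 1))⁻¹ - 1 := by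
  intro j hj
  have hc : constantCoeff ((1 - (X : PowerSeries ℚ) ^ j) * (1 - X ^ (2 * j)) ^ (c - 1)) = 1 := by
    rw [map_mul, map_pow, constOne hj, constOne (by omega), one_pow, one_mul]
  have hd : (X : PowerSeries ℚ) ^ j ∣
      (1 - (X : PowerSeries ℚ) ^ j) * (1 - X ^ (2 * j)) ^ (c - 1) - 1 :=
    mul_sub_one_dvd (one_sub_cond le_rfl) (pow_sub_one_dvd (one_sub_cond (by omega)) _)
  have := inv_cond (w := 1) (by rw [hc]; norm_num) hd (by simp)
  rwa [one_mul] at this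

/-- exact identity (a): `ψ(q^m) f(q^m) = f(q^{2m})^2`. -/
lemma psiM_mul_fM {m : ℕ} (hm : 1 ≤ m) : psiM m * fM m = fM (2 * m) ^ 2 := by
  rw [psiM, fM, iprod_mul (psiM_cond hm) (fM_cond hm), fM,
    iprod_pow (fM_cond (by omega : 1 ≤ 2 * m)) 2]
  apply iprod_congr
  intro j hj
  rw [mul_assoc, PowerSeries.inv_mul_cancel _ (by rw [constOne (by nlinarith)]; norm_num), mul_one]

/-- exact identity (b): `F_c(q) f_1 f_2^{c-1} = 1`. -/
lemma F_mul_fM (c : ℕ) : F c * (fM 1 * fM 2 ^ (c - 1)) = 1 := by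
  have h2 : ∀ j, 1 ≤ j → (X : PowerSeries ℚ) ^ j ∣
      (1 - (X : PowerSeries ℚ) ^ (2 * j)) ^ (c - 1) - 1 :=
    fun j hj => pow_sub_one_dvd (one_sub_cond (by omega)) _
  have hprod : fM 1 * fM 2 ^ (c - 1)
      = iprod (fun j => (1 - (X : PowerSeries ℚ) ^ (1 * j)) * (1 - X ^ (2 * j)) ^ (c - 1)) := by
    rw [fM, fM, iprod_pow (fM_cond (by omega : (1:ℕ) ≤ 2)) (c - 1)]
    exact iprod_mul (fM_cond le_rfl) h2
  have hcond2 : ∀ j, 1 ≤ j → (X : PowerSeries ℚ) ^ j ∣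
      (1 - (X : PowerSeries ℚ) ^ (1 * j)) * (1 - X ^ (2 * j)) ^ (c - 1) - 1 :=
    fun j hj => mul_sub_one_dvd (one_sub_cond (by omega)) (h2 j hj)
  rw [hprod, F, iprod_mul (F_cond c) hcond2]
  have heq : iprod (fun j => ((1 - (X : PowerSeries ℚ) ^ j) * (1 - X ^ (2 * j)) ^ (c - 1))⁻¹
        * ((1 - X ^ (1 * j)) * (1 - X ^ (2 * j)) ^ (c - 1)))
      = iprod (fun _ => (1 : PowerSeries ℚ)) := by
    apply iprod_congr
    intro j hj
    rw [one_mul]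
    exact PowerSeries.inv_mul_cancel _ (by
      rw [map_mul, map_pow, constOne hj, constOne (by omega), one_pow, one_mul]; norm_num)
  rw [heq, iprod_one]

lemma base {p : ℕ} (hp2 : 2 ≤ p) : psiM 1 = F (p - 1) * fM 2 ^ p := by
  have ha : psiM 1 * fM 1 = fM 2 ^ 2 := by
    have := psiM_mul_fM (le_refl 1)
    rwa [(by norm_num : 2 * 1 = 2)] at this
  have hb : F (p - 1) * (fM 1 * fM 2 ^ (p - 2)) = 1 := by
    have := F_mul_fM (p - 1)
    rwa [(by omega : p - 1 - 1 = p - 2)] at this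
  have hsplit : fM 2 ^ p = fM 2 ^ (p - 2) * fM 2 ^ 2 := by
    rw [← pow_add]
    congr 1
    omega
  calc psiM 1 = psiM 1 * (F (p - 1) * (fM 1 * fM 2 ^ (p - 2))) := by rw [hb, mul_one]
    _ = F (p - 1) * (fM 2 ^ (p - 2) * (psiM 1 * fM 1)) := by ring
    _ = F (p - 1) * (fM 2 ^ (p - 2) * fM 2 ^ 2) := by rw [ha]
    _ = F (p - 1) * fM 2 ^ p := by rw [hsplit]

lemma telescope {p : ℕ} (hp2 : 2 ≤ p) (N : ℕ) :
    psiM 1 * ∏ i ∈ Finset.Icc 1 N, psiM (2 ^ i) ^ (p * 2 ^ (i - 1))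
      = F (p - 1) * fM (2 ^ (N + 1)) ^ (p * 2 ^ N) := by
  induction N with
  | zero =>
    simp only [Finset.Icc_eq_empty_of_lt (by norm_num : (0:ℕ) < 1), Finset.prod_empty, mul_one]
    rw [base hp2]
    norm_num
  | succ N ih =>
    rw [Finset.prod_Icc_succ_top (by omega : 1 ≤ N + 1), ← mul_assoc, ih]
    have hstep : psiM (2 ^ (N + 1)) * fM (2 ^ (N + 1)) = fM (2 ^ (N + 2)) ^ 2 := by
      have := psiM_mul_fM (m := 2 ^ (N + 1)) (Nat.one_le_two_pow)
      rwa [(by rw [pow_succ]; ring : 2 * 2 ^ (N + 1) = 2 ^ (N + 2))] at this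
    have : F (p - 1) * fM (2 ^ (N + 1)) ^ (p * 2 ^ N)
          * psiM (2 ^ (N + 1)) ^ (p * 2 ^ (N + 1 - 1))
        = F (p - 1) * (psiM (2 ^ (N + 1)) * fM (2 ^ (N + 1))) ^ (p * 2 ^ N) := by
      rw [(by omega : N + 1 - 1 = N), mul_pow]
      ring
    rw [this, hstep, ← pow_mul]
    congr 2
    rw [pow_succ]
    ring

/-- For an odd prime `p`, `F_{p-1}(q) = ψ(q) ∏_{i≥1} ψ(q^{2^i})^{p·2^{i-1}}`. -/
theorem F_pred_prime_product (p : ℕ) (hp : p.Prime) (hodd : Odd p) :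
    F (p - 1) = psiM 1 * iprod (fun i => (psiM (2 ^ i)) ^ (p * 2 ^ (i - 1))) := by
  have hp2 : 2 ≤ p := hp.two_le
  have hgcond : ∀ i, 1 ≤ i →
      (X : PowerSeries ℚ) ^ i ∣ psiM (2 ^ i) ^ (p * 2 ^ (i - 1)) - 1 := by
    intro i hi
    have h1 : (X : PowerSeries ℚ) ^ (2 ^ i) ∣ psiM (2 ^ i) - 1 :=
      psiM_sub_one Nat.one_le_two_pow
    exact (pow_dvd_pow (X : PowerSeries ℚ) (Nat.le_of_lt (Nat.lt_two_pow_self (n := i)))).trans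
      (pow_sub_one_dvd h1 _)
  apply PowerSeries.ext
  intro n
  have h1 : (X : PowerSeries ℚ) ^ (n + 1) ∣
      psiM 1 * iprod (fun i => (psiM (2 ^ i)) ^ (p * 2 ^ (i - 1)))
        - psiM 1 * ∏ i ∈ Finset.Icc 1 n, psiM (2 ^ i) ^ (p * 2 ^ (i - 1)) := by
    rw [← mul_sub]
    exact (iprod_trunc hgcond le_rfl).mul_left _
  have h3 : (X : PowerSeries ℚ) ^ (n + 1) ∣
      F (p - 1) * fM (2 ^ (n + 1)) ^ (p * 2 ^ n) - F (p - 1) := by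
    have hf : (X : PowerSeries ℚ) ^ (2 ^ (n + 1)) ∣ fM (2 ^ (n + 1)) ^ (p * 2 ^ n) - 1 :=
      pow_sub_one_dvd (fM_sub_one Nat.one_le_two_pow) _
    have : F (p - 1) * fM (2 ^ (n + 1)) ^ (p * 2 ^ n) - F (p - 1)
        = F (p - 1) * (fM (2 ^ (n + 1)) ^ (p * 2 ^ n) - 1) := by ring
    rw [this]
    exact ((pow_dvd_pow (X : PowerSeries ℚ)
      (Nat.le_of_lt (Nat.lt_two_pow_self (n := n + 1)))).trans hf).mul_left _
  rw [dvd_coeff_eq h1 (Nat.lt_succ_self n), telescope hp2 n,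
    dvd_coeff_eq h3 (Nat.lt_succ_self n)]
end

section
/- Let p ≥ 3 be prime and let r with 1 ≤ r ≤ p-1 be such that a_{p-1}(pn+r) ≡ 0 (mod p) for all n ≥ 0. Then for every positive integer k and all n ≥ 0, a_{kp-1}(pn+r) ≡ 0 (mod p). -/
/-- The set of generalized cubic partitions of `n` with `c` colors for even parts:
a partition is encoded as a multiset of (part, color) pairs, where each part is positive,
even parts carry a color `< c`, and odd parts carry the single color `0`. -/
def cubicPartitionSet (c n : ℕ) : Set (Multiset (ℕ × ℕ)) :=
  {M | (∀ x ∈ M, 0 < x.1 ∧ (if Even x.1 then x.2 < c else x.2 = 0)) ∧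
    (M.map Prod.fst).sum = n}

/-- `a c n` is the number of generalized cubic partitions of `n` with `c` colors. -/
noncomputable def a (c n : ℕ) : ℕ := (cubicPartitionSet c n).ncard

/-! ### Auxiliary definitions -/

/-- Partitions of `n` into even parts, each carrying one of `c` colors. -/
def evenSet (c n : ℕ) : Set (Multiset (ℕ × ℕ)) :=
  {M | (∀ x ∈ M, 0 < x.1 ∧ Even x.1 ∧ x.2 < c) ∧ (M.map Prod.fst).sum = n}

/-! ### Finiteness -/

lemma multiset_finite (s : Finset (ℕ × ℕ)) (n : ℕ) :
    {M : Multiset (ℕ × ℕ) | (∀ x ∈ M, x ∈ s) ∧ Multiset.card M ≤ n}.Finite := by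
  have hsub : {M : Multiset (ℕ × ℕ) | (∀ x ∈ M, x ∈ s) ∧ Multiset.card M ≤ n} ⊆
      ⋃ k ∈ Finset.range (n + 1),
        (fun (y : Sym (ℕ × ℕ) k) => (y : Multiset (ℕ × ℕ))) '' ↑(s.sym k) := by
    rintro M ⟨h1, h2⟩
    refine Set.mem_biUnion (Finset.mem_range.2 (Nat.lt_succ_of_le h2)) ?_
    refine ⟨⟨M, rfl⟩, ?_, rfl⟩
    exact Finset.mem_coe.2 (Finset.mem_sym_iff.2 fun a ha => h1 a ha)
  refine Set.Finite.subset ?_ hsub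
  exact Set.Finite.biUnion (Finset.range (n + 1)).finite_toSet
    fun k _ => (s.sym k).finite_toSet.image _

lemma card_le_sum_parts (M : Multiset (ℕ × ℕ)) (h : ∀ x ∈ M, 0 < x.1) :
    Multiset.card M ≤ (M.map Prod.fst).sum := by
  have h1 : Multiset.card (M.map Prod.fst) • 1 ≤ (M.map Prod.fst).sum := by
    apply Multiset.card_nsmul_le_sum
    intro x hx
    obtain ⟨y, hy, rfl⟩ := Multiset.mem_map.1 hx
    exact h y hy
  simpa using h1

lemma part_le_sum (M : Multiset (ℕ × ℕ)) (x : ℕ × ℕ) (hx : x ∈ M) :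
    x.1 ≤ (M.map Prod.fst).sum :=
  Multiset.single_le_sum (fun _ _ => Nat.zero_le _) _ (Multiset.mem_map_of_mem _ hx)

lemma cubic_finite (c n : ℕ) : (cubicPartitionSet c n).Finite := by
  refine Set.Finite.subset (multiset_finite (Finset.range (n + 1) ×ˢ Finset.range (c + 1)) n) ?_
  rintro M ⟨h1, h2⟩
  constructor
  · intro x hx
    rw [Finset.mem_product, Finset.mem_range, Finset.mem_range]
    constructor
    · exact Nat.lt_succ_of_le (h2 ▸ part_le_sum M x hx)
    · rcases h1 x hx with ⟨-, h⟩
      split_ifs at h <;> omega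
  · exact h2 ▸ card_le_sum_parts M fun x hx => (h1 x hx).1

lemma even_finite (c n : ℕ) : (evenSet c n).Finite := by
  refine Set.Finite.subset (multiset_finite (Finset.range (n + 1) ×ˢ Finset.range (c + 1)) n) ?_
  rintro M ⟨h1, h2⟩
  constructor
  · intro x hx
    rw [Finset.mem_product, Finset.mem_range, Finset.mem_range]
    refine ⟨Nat.lt_succ_of_le (h2 ▸ part_le_sum M x hx), ?_⟩
    have := (h1 x hx).2.2
    omega
  · exact h2 ▸ card_le_sum_parts M fun x hx => (h1 x hx).1

/-! ### The orbit-sum lemma -/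

/-- If `σ` maps a finset `s` into itself, `σ^[p] = id` on `s`, `σ` has no fixed points in `s`,
and `f` is `σ`-invariant on `s`, with `p` prime, then `p` divides `∑ x ∈ s, f x`. -/
lemma orbit_sum {α : Type*} [DecidableEq α] {p : ℕ} (hp : p.Prime) (σ : α → α) (f : α → ℕ)
    (s : Finset α) :
    (∀ x ∈ s, σ x ∈ s) → (∀ x ∈ s, σ^[p] x = x) → (∀ x ∈ s, σ x ≠ x) →
    (∀ x ∈ s, f (σ x) = f x) → p ∣ ∑ x ∈ s, f x := by
  induction s using Finset.strongInduction with
  | _ s ih =>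
  intro hcl hper hnf hf
  rcases s.eq_empty_or_nonempty with rfl | ⟨x, hx⟩
  · simp
  have hp2 : 2 ≤ p := hp.two_le
  -- iterates stay in `s`
  have hit : ∀ t : ℕ, ∀ y ∈ s, σ^[t] y ∈ s := by
    intro t
    induction t with
    | zero => intro y hy; simpa using hy
    | succ t iht =>
      intro y hy
      rw [Function.iterate_succ_apply]
      exact iht _ (hcl y hy)
  -- multiples of a period are periods
  have hmul : ∀ y ∈ s, ∀ d : ℕ, σ^[d] y = y → ∀ k : ℕ, σ^[k * d] y = y := by
    intro y hy d hd k
    induction k with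
    | zero => simp
    | succ k ihk =>
      have e : (k + 1) * d = k * d + d := by ring
      rw [e, Function.iterate_add_apply, hd, ihk]
  -- no positive period smaller than `p`
  have hnosmall : ∀ d : ℕ, 0 < d → d < p → σ^[d] x = x → False := by
    intro d hd1 hd2 hcon
    have hnd : ¬ p ∣ d := by
      intro hdvd
      have := Nat.le_of_dvd hd1 hdvd
      omega
    have hcop : Nat.Coprime d p := ((Nat.Prime.coprime_iff_not_dvd hp).2 hnd).symm
    obtain ⟨u, -, hu⟩ := Nat.exists_mul_mod_eq_one_of_coprime hcop (by omega)
    have hdu : d * u = p * (d * u / p) + 1 := by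
      have := Nat.div_add_mod (d * u) p
      omega
    have h1 : σ^[d * u] x = x := by
      rw [mul_comm]
      exact hmul x hx d hcon u
    rw [hdu, Function.iterate_add_apply] at h1
    have h2 : σ^[p * (d * u / p)] (σ^[1] x) = σ x := by
      rw [Function.iterate_one, mul_comm]
      exact hmul (σ x) (hcl x hx) p (hper (σ x) (hcl x hx)) _
    rw [h2] at h1
    exact hnf x hx h1
  -- the orbit map is injective on `range p`
  have hmain : ∀ i j : ℕ, i < j → j < p → σ^[i] x = σ^[j] x → False := by
    intro i j hij hjp he
    apply hnosmall (j - i) (by omega) (by omega)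
    have e1 : σ^[p - i] (σ^[i] x) = x := by
      rw [← Function.iterate_add_apply, show p - i + i = p by omega]
      exact hper x hx
    have e2 : σ^[p - i] (σ^[j] x) = σ^[j - i] x := by
      rw [← Function.iterate_add_apply, show p - i + j = (j - i) + p by omega,
        Function.iterate_add_apply, hper x hx]
    rw [← he, e1] at e2
    exact e2.symm
  have hinj : ∀ i < p, ∀ j < p, σ^[i] x = σ^[j] x → i = j := by
    intro i hi j hj he
    rcases Nat.lt_trichotomy i j with hlt | heq | hgt
    · exact absurd he (fun he => hmain i j hlt hj he)
    · exact heq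
    · exact absurd he.symm (fun he => hmain j i hgt hi he)
  -- the orbit of x
  set O : Finset α := (Finset.range p).image (fun t => σ^[t] x) with hO
  have hOsub : O ⊆ s := by
    intro y hy
    obtain ⟨t, ht, rfl⟩ := Finset.mem_image.1 hy
    exact hit t x hx
  have hOx : x ∈ O := Finset.mem_image.2 ⟨0, Finset.mem_range.2 (by omega), rfl⟩
  have horb : ∀ t : ℕ, σ^[t] x ∈ O := by
    intro t
    rw [← Nat.mod_add_div' t p, Function.iterate_add_apply, hmul x hx p (hper x hx) (t / p)]
    exact Finset.mem_image.2 ⟨t % p, Finset.mem_range.2 (Nat.mod_lt _ (by omega)), rfl⟩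
  have hfit : ∀ t : ℕ, f (σ^[t] x) = f x := by
    intro t
    induction t with
    | zero => rfl
    | succ t iht => rw [Function.iterate_succ_apply', hf _ (hit t x hx), iht]
  have hsumO : ∑ y ∈ O, f y = p * f x := by
    rw [hO, Finset.sum_image (fun i hi j hj he =>
      hinj i (Finset.mem_range.1 hi) j (Finset.mem_range.1 hj) he)]
    rw [Finset.sum_congr rfl (fun t _ => hfit t), Finset.sum_const, Finset.card_range,
      smul_eq_mul]
  -- recursive step on the complement
  have hrec : p ∣ ∑ y ∈ s \ O, f y := by
    apply ih (s \ O) (Finset.sdiff_ssubset hOsub ⟨x, hOx⟩)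
    · intro y hy
      rw [Finset.mem_sdiff] at hy ⊢
      refine ⟨hcl y hy.1, fun hyO => hy.2 ?_⟩
      obtain ⟨t, _, hty⟩ := Finset.mem_image.1 hyO
      have e3 : σ^[p - 1] (σ y) = y := by
        rw [← Function.iterate_succ_apply, show (p - 1).succ = p by omega]
        exact hper y hy.1
      have e2 : σ^[p - 1] (σ y) = σ^[p - 1 + t] x := by
        rw [← hty, ← Function.iterate_add_apply]
      rw [e3] at e2
      rw [e2]
      exact horb _
    · intro y hy; exact hper y (Finset.mem_sdiff.1 hy).1
    · intro y hy; exact hnf y (Finset.mem_sdiff.1 hy).1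
    · intro y hy; exact hf y (Finset.mem_sdiff.1 hy).1
  have hsplit := Finset.sum_sdiff hOsub (f := f)
  rw [← hsplit, hsumO]
  exact Nat.dvd_add hrec (Dvd.intro _ rfl)

/-! ### The color rotation -/

/-- Rotation of colors: `c ↦ c+1`, wrapping `p-1 ↦ 0`.  Globally injective on `ℕ`. -/
def tauc (p : ℕ) (c : ℕ) : ℕ := if c + 1 = p then 0 else c + 1

/-- Rotation of the color of a colored part. -/
def tau (p : ℕ) (x : ℕ × ℕ) : ℕ × ℕ := (x.1, tauc p x.2)

lemma tauc_lt {p : ℕ} (hp : 2 ≤ p) {c : ℕ} (h : c < p) : tauc p c < p := by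
  unfold tauc; split_ifs <;> omega

lemma tauc_inj (p : ℕ) : Function.Injective (tauc p) := by
  intro x y hxy
  unfold tauc at hxy
  split_ifs at hxy <;> omega

lemma tau_inj (p : ℕ) : Function.Injective (tau p) := by
  rintro ⟨a1, a2⟩ ⟨b1, b2⟩ h
  have h1 : a1 = b1 := congrArg Prod.fst h
  have h2 : tauc p a2 = tauc p b2 := congrArg Prod.snd h
  have := tauc_inj p h2
  simp_all

lemma tauc_iter {p : ℕ} (hp : 2 ≤ p) : ∀ t c, c < p → (tauc p)^[t] c = (c + t) % p := by
  intro t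
  induction t with
  | zero => intro c hc; simp [Nat.mod_eq_of_lt hc]
  | succ t iht =>
    intro c hc
    rw [Function.iterate_succ_apply, iht _ (tauc_lt hp hc)]
    unfold tauc
    split_ifs with hcp
    · rw [zero_add, show c + (t + 1) = p + t by omega, Nat.add_mod_left]
    · rw [show c + 1 + t = c + (t + 1) by omega]

lemma tau_iter_eq (p : ℕ) : ∀ t x, (tau p)^[t] x = (x.1, (tauc p)^[t] x.2) := by
  intro t
  induction t with
  | zero => intro x; rfl
  | succ t iht =>
    intro x
    rw [Function.iterate_succ_apply, iht]
    rfl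

lemma tau_per {p : ℕ} (hp : 2 ≤ p) {x : ℕ × ℕ} (h : x.2 < p) : (tau p)^[p] x = x := by
  rw [tau_iter_eq, tauc_iter hp p x.2 h, Nat.add_mod_right, Nat.mod_eq_of_lt h]

lemma map_iter {α : Type*} (g : α → α) : ∀ (t : ℕ) (M : Multiset α),
    (Multiset.map g)^[t] M = M.map (g^[t]) := by
  intro t
  induction t with
  | zero => intro M; simp
  | succ t iht =>
    intro M
    rw [Function.iterate_succ_apply, iht, Multiset.map_map, ← Function.iterate_succ]

/-! ### Divisibility for even-part partitions -/

lemma even_dvd {p : ℕ} (hp : p.Prime) (m : ℕ) (hm : ¬ p ∣ m) : p ∣ (evenSet p m).ncard := by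
  have hp2 : 2 ≤ p := hp.two_le
  have hfin := even_finite p m
  rw [Set.ncard_eq_toFinset_card _ hfin, Finset.card_eq_sum_ones]
  apply orbit_sum hp (Multiset.map (tau p)) (fun _ => 1)
  · -- closure
    intro M hM
    rw [Set.Finite.mem_toFinset] at hM ⊢
    obtain ⟨h1, h2⟩ := hM
    constructor
    · intro x hx
      obtain ⟨y, hy, rfl⟩ := Multiset.mem_map.1 hx
      obtain ⟨hy1, hy2, hy3⟩ := h1 y hy
      exact ⟨hy1, hy2, tauc_lt hp2 hy3⟩
    · rw [Multiset.map_map]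
      exact h2
  · -- period
    intro M hM
    rw [Set.Finite.mem_toFinset] at hM
    rw [map_iter]
    have hid : ∀ x ∈ M, (tau p)^[p] x = id x :=
      fun x hx => tau_per hp2 (hM.1 x hx).2.2
    rw [Multiset.map_congr rfl hid, Multiset.map_id]
  · -- no fixed points
    intro M hM hfix
    rw [Set.Finite.mem_toFinset] at hM
    apply hm
    obtain ⟨h1, h2⟩ := hM
    rw [← h2, Finset.sum_multiset_map_count]
    apply orbit_sum hp (tau p) (fun x => Multiset.count x M • x.1)
    · intro x hx
      rw [Multiset.mem_toFinset] at hx ⊢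
      rw [← hfix]
      exact Multiset.mem_map_of_mem _ hx
    · intro x hx
      rw [Multiset.mem_toFinset] at hx
      exact tau_per hp2 (h1 x hx).2.2
    · intro x hx
      rw [Multiset.mem_toFinset] at hx
      intro hcon
      have h3 := (h1 x hx).2.2
      have h4 : tauc p x.2 = x.2 := congrArg Prod.snd hcon
      unfold tauc at h4
      split_ifs at h4 <;> omega
    · intro x hx
      have hc : Multiset.count (tau p x) M = Multiset.count x M := by
        conv_lhs => rw [← hfix]
        exact Multiset.count_map_eq_count' _ _ (tau_inj p) x
      show Multiset.count (tau p x) M • (tau p x).1 = Multiset.count x M • x.1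
      rw [hc]
      rfl
  · intro M hM
    rfl

/-! ### The convolution identity -/

lemma conv (p c N : ℕ) (hc : 1 ≤ c) :
    a (c + p) N = ∑ m ∈ Finset.range (N + 1), (evenSet p m).ncard * a c (N - m) := by
  classical
  have hA := cubic_finite (c + p) N
  rw [show a (c + p) N = hA.toFinset.card from Set.ncard_eq_toFinset_card _ hA]
  have hstep : ∀ m, (evenSet p m).ncard * a c (N - m) =
      ((even_finite p m).toFinset ×ˢ (cubic_finite c (N - m)).toFinset).card := by
    intro m
    rw [Finset.card_product, Set.ncard_eq_toFinset_card _ (even_finite p m), a,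
      Set.ncard_eq_toFinset_card _ (cubic_finite c (N - m))]
  rw [Finset.sum_congr rfl (fun m _ => hstep m), ← Finset.card_sigma]
  refine Finset.card_bij'
    (fun M _ => (⟨((M.filter fun x => ¬ x.2 < c).map Prod.fst).sum,
        (M.filter fun x => ¬ x.2 < c).map fun x => (x.1, x.2 - c),
        M.filter fun x => x.2 < c⟩ : Σ _ : ℕ, Multiset (ℕ × ℕ) × Multiset (ℕ × ℕ)))
    (fun b _ => b.2.2 + b.2.1.map fun x => (x.1, x.2 + c)) ?_ ?_ ?_ ?_
  · -- forward membership
    intro M hM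
    rw [Set.Finite.mem_toFinset] at hM
    obtain ⟨h1, h2⟩ := hM
    have hsplit : M.filter (fun x => x.2 < c) + M.filter (fun x => ¬ x.2 < c) = M :=
      Multiset.filter_add_not _ M
    have hsum : ((M.filter (fun x => x.2 < c)).map Prod.fst).sum
        + ((M.filter (fun x => ¬ x.2 < c)).map Prod.fst).sum = N := by
      rw [← Multiset.sum_add, ← Multiset.map_add, hsplit, h2]
    rw [Finset.mem_sigma, Finset.mem_product]
    dsimp only
    refine ⟨Finset.mem_range.2 (by omega), ?_, ?_⟩
    · rw [Set.Finite.mem_toFinset]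
      constructor
      · intro x hx
        obtain ⟨y, hy, rfl⟩ := Multiset.mem_map.1 hx
        rw [Multiset.mem_filter] at hy
        obtain ⟨hyM, hy2⟩ := hy
        obtain ⟨hpos, hcol⟩ := h1 y hyM
        by_cases he : Even y.1
        · rw [if_pos he] at hcol
          exact ⟨hpos, he, by omega⟩
        · rw [if_neg he] at hcol
          omega
      · rw [Multiset.map_map]
        rfl
    · rw [Set.Finite.mem_toFinset]
      constructor
      · intro x hx
        rw [Multiset.mem_filter] at hx
        obtain ⟨hxM, hx2⟩ := hx
        obtain ⟨hpos, hcol⟩ := h1 x hxM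
        refine ⟨hpos, ?_⟩
        split_ifs with he
        · exact hx2
        · rw [if_neg he] at hcol
          exact hcol
      · omega
  · -- backward membership
    rintro ⟨m, M1, M0⟩ hb
    dsimp only
    rw [Finset.mem_sigma, Finset.mem_product, Finset.mem_range,
      Set.Finite.mem_toFinset, Set.Finite.mem_toFinset] at hb
    obtain ⟨hmN, ⟨hE1, hE2⟩, ⟨hC1, hC2⟩⟩ := hb
    rw [Set.Finite.mem_toFinset]
    constructor
    · intro x hx
      rw [Multiset.mem_add] at hx
      rcases hx with hx | hx
      · obtain ⟨hpos, hcol⟩ := hC1 x hx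
        refine ⟨hpos, ?_⟩
        split_ifs with he
        · rw [if_pos he] at hcol
          omega
        · rw [if_neg he] at hcol
          exact hcol
      · obtain ⟨y, hy, rfl⟩ := Multiset.mem_map.1 hx
        obtain ⟨hpos, heven, hlt⟩ := hE1 y hy
        refine ⟨hpos, ?_⟩
        rw [if_pos heven]
        show y.2 + c < c + p
        omega
    · rw [Multiset.map_add, Multiset.sum_add, hC2, Multiset.map_map,
        show (Prod.fst ∘ fun x : ℕ × ℕ => (x.1, x.2 + c)) = Prod.fst from rfl, hE2]
      omega
  · -- left inverse
    intro M hM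
    dsimp only
    rw [Multiset.map_map]
    have hcongr : ∀ x ∈ M.filter (fun x : ℕ × ℕ => ¬ x.2 < c),
        ((fun x : ℕ × ℕ => (x.1, x.2 + c)) ∘ fun x => (x.1, x.2 - c)) x = id x := by
      intro x hx
      rw [Multiset.mem_filter] at hx
      have hcx : c ≤ x.2 := by omega
      simp only [Function.comp_apply, id_eq]
      rw [Nat.sub_add_cancel hcx]
    rw [Multiset.map_congr rfl hcongr, Multiset.map_id]
    exact Multiset.filter_add_not _ M
  · -- right inverse
    rintro ⟨m, M1, M0⟩ hb
    dsimp only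
    rw [Finset.mem_sigma, Finset.mem_product, Finset.mem_range,
      Set.Finite.mem_toFinset, Set.Finite.mem_toFinset] at hb
    obtain ⟨hmN, ⟨hE1, hE2⟩, ⟨hC1, hC2⟩⟩ := hb
    have hself : (M0 : Multiset (ℕ × ℕ)).filter (fun x => x.2 < c) = M0 := by
      rw [Multiset.filter_eq_self]
      intro x hx
      obtain ⟨hpos, hcol⟩ := hC1 x hx
      split_ifs at hcol <;> omega
    have hnil : (M1.map fun x : ℕ × ℕ => (x.1, x.2 + c)).filter (fun x => x.2 < c) = 0 := by
      rw [Multiset.filter_eq_nil]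
      intro x hx
      obtain ⟨y, hy, rfl⟩ := Multiset.mem_map.1 hx
      show ¬ y.2 + c < c
      omega
    have hself' : (M1.map fun x : ℕ × ℕ => (x.1, x.2 + c)).filter (fun x => ¬ x.2 < c)
        = M1.map fun x : ℕ × ℕ => (x.1, x.2 + c) := by
      rw [Multiset.filter_eq_self]
      intro x hx
      obtain ⟨y, hy, rfl⟩ := Multiset.mem_map.1 hx
      show ¬ y.2 + c < c
      omega
    have hnil' : (M0 : Multiset (ℕ × ℕ)).filter (fun x => ¬ x.2 < c) = 0 := by
      rw [Multiset.filter_eq_nil]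
      intro x hx
      obtain ⟨hpos, hcol⟩ := hC1 x hx
      intro hcon
      apply hcon
      split_ifs at hcol <;> omega
    have key0 : (M0 + M1.map fun x : ℕ × ℕ => (x.1, x.2 + c)).filter (fun x => x.2 < c)
        = M0 := by
      rw [Multiset.filter_add, hself, hnil, add_zero]
    have key1 : (M0 + M1.map fun x : ℕ × ℕ => (x.1, x.2 + c)).filter (fun x => ¬ x.2 < c)
        = M1.map fun x : ℕ × ℕ => (x.1, x.2 + c) := by
      rw [Multiset.filter_add, hnil', hself', zero_add]
    have hmap : ((M1.map fun x : ℕ × ℕ => (x.1, x.2 + c)).map fun x => (x.1, x.2 - c))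
        = M1 := by
      rw [Multiset.map_map]
      have hcongr : ∀ x ∈ M1,
          ((fun x : ℕ × ℕ => (x.1, x.2 - c)) ∘ fun x => (x.1, x.2 + c)) x = id x := by
        intro x hx
        simp only [Function.comp_apply, id_eq]
        rw [Nat.add_sub_cancel]
      rw [Multiset.map_congr rfl hcongr, Multiset.map_id]
    have hsum' : (((M1.map fun x : ℕ × ℕ => (x.1, x.2 + c)).map Prod.fst)).sum = m := by
      rw [Multiset.map_map,
        show (Prod.fst ∘ fun x : ℕ × ℕ => (x.1, x.2 + c)) = Prod.fst from rfl, hE2]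
    rw [key0, key1, hmap, hsum']

/-! ### Main theorem -/

/-- If `p ≥ 3` is prime, `1 ≤ r ≤ p-1`, and `a_{p-1}(pn+r) ≡ 0 (mod p)` for all `n`,
then for every `k ≥ 1` and all `n`, `a_{kp-1}(pn+r) ≡ 0 (mod p)`. -/
theorem a_kp_pred_cong (p : ℕ) (hp : p.Prime) (hp3 : 3 ≤ p) (r : ℕ)
    (hr1 : 1 ≤ r) (hr2 : r ≤ p - 1)
    (h : ∀ n : ℕ, p ∣ a (p - 1) (p * n + r))
    (k : ℕ) (hk : 1 ≤ k) (n : ℕ) :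
    p ∣ a (k * p - 1) (p * n + r) := by
  induction k, hk using Nat.le_induction generalizing n with
  | base => rw [one_mul]; exact h n
  | succ k hk1 ih =>
    have hkp : p ≤ k * p := Nat.le_mul_of_pos_left p (by omega)
    have heq : (k + 1) * p - 1 = (k * p - 1) + p := by
      have e : (k + 1) * p = k * p + p := by ring
      omega
    rw [heq, conv p (k * p - 1) (p * n + r) (by omega)]
    apply Finset.dvd_sum
    intro m hm
    by_cases hdvd : p ∣ m
    · obtain ⟨t, rfl⟩ := hdvd
      rw [Finset.mem_range] at hm
      have hrp : r < p := by omega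
      have htn : t ≤ n := by
        by_contra hcon
        push_neg at hcon
        have h5 : p * (n + 1) ≤ p * t := Nat.mul_le_mul_left p hcon
        have h6 : p * (n + 1) = p * n + p := by ring
        omega
      have hsub : p * n + r - p * t = p * (n - t) + r := by
        have e : p * n = p * t + p * (n - t) := by
          rw [← Nat.mul_add, show t + (n - t) = n by omega]
        omega
      rw [hsub]
      exact Dvd.dvd.mul_left (ih (n - t)) _
    · exact Dvd.dvd.mul_right (even_dvd hp m hdvd) _
end
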